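/- Let α ∈ [0,1] be irrational with convergents p_n/q_n, n ≥ 2, and let v_α(k) = χ_{[1−α,1)}(kα mod 1). Then for all integers k with 1 ≤ k ≤ q_n − 2, we have v_{α_n}(k) = v_α(k), where α_n = p_n/q_n and v_{α_n}(k) = χ_{[1−α_n,1)}(kα_n mod 1). -/

import Mathlib

/-- The Sturmian word `v_β(n) = χ_{[1−β,1)}(nβ mod 1)` for slope `β`. -/
noncomputable def sturmian (β : ℝ) (n : ℤ) : ℝ :=
  if Int.fract (n * β) ∈ Set.Ico (1 - β) 1 then 1 else 0

namespace StmtAux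

open GenContFract

lemma not_terminatedAt (α : ℝ) (hα : Irrational α) (n : ℕ) :
    ¬ (GenContFract.of α).TerminatedAt n := by
  intro h
  obtain ⟨q, hq⟩ := ((terminates_iff_rat α).mp ⟨n, h⟩)
  exact hα ⟨q, hq.symm⟩

lemma contsAux_int (α : ℝ) (hα : Irrational α) :
    ∀ n : ℕ, ∃ a b : ℤ, ((GenContFract.of α).contsAux n).a = (a : ℝ) ∧ ((GenContFract.of α).contsAux n).b = (b : ℝ) := by
  intro n
  induction n using Nat.strong_induction_on with
  | _ n ih =>
    match n with
    | 0 => exact ⟨1, 0, by simp [zeroth_contAux_eq_one_zero], by simp [zeroth_contAux_eq_one_zero]⟩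
    | 1 =>
      refine ⟨⌊α⌋, 1, ?_, ?_⟩ <;> simp [first_contAux_eq_h_one, of_h_eq_floor]
    | (n + 2) =>
      obtain ⟨gp, hgp⟩ : ∃ gp, (GenContFract.of α).s.get? n = some gp :=
        Option.ne_none_iff_exists'.1 (not_terminatedAt α hα n)
      have ha : gp.a = 1 := of_partNum_eq_one (partNum_eq_s_a hgp)
      obtain ⟨z, hz⟩ : ∃ z : ℤ, gp.b = (z : ℝ) :=
        exists_int_eq_of_partDen (partDen_eq_s_b hgp)
      obtain ⟨a₀, b₀, ha₀, hb₀⟩ := ih n (by omega)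
      obtain ⟨a₁, b₁, ha₁, hb₁⟩ := ih (n + 1) (by omega)
      refine ⟨z * a₁ + a₀, z * b₁ + b₀, ?_, ?_⟩ <;>
        simp [contsAux, hgp, nextConts, nextNum, nextDen, ha, hz, ha₀, hb₀, ha₁, hb₁] <;>
        push_cast <;> ring

/-- A general reformulation of the Sturmian condition via floors. -/
lemma fract_mem_iff (β : ℝ) (k : ℤ) :
    Int.fract ((k : ℝ) * β) ∈ Set.Ico (1 - β) 1 ↔ ⌊(k : ℝ) * β⌋ + 1 ≤ ⌊((k : ℝ) + 1) * β⌋ := by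
  rw [Set.mem_Ico]
  constructor
  · rintro ⟨h1, -⟩
    rw [Int.fract] at h1
    have : (((⌊(k : ℝ) * β⌋ : ℤ) + 1 : ℤ) : ℝ) ≤ ((k : ℝ) + 1) * β := by push_cast; nlinarith
    exact Int.le_floor.mpr this
  · intro h
    refine ⟨?_, Int.fract_lt_one _⟩
    have h2 : (((⌊(k : ℝ) * β⌋ : ℤ) + 1 : ℤ) : ℝ) ≤ ((k : ℝ) + 1) * β :=
      le_trans (by exact_mod_cast Int.cast_le.mpr h) (Int.floor_le _)
    rw [Int.fract]
    push_cast at h2 ⊢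
    nlinarith

lemma floor_conv_eq (x : ℝ) (P Q : ℤ) (hQ : 0 < Q) (hcop : IsCoprime P Q)
    (q' : ℝ) (hq' : (Q : ℝ) ≤ q')
    (happ : |x - (P : ℝ) / (Q : ℝ)| ≤ 1 / ((Q : ℝ) * q'))
    (m : ℤ) (hm1 : 1 ≤ m) (hm2 : m ≤ Q - 1) :
    ⌊(m : ℝ) * ((P : ℝ) / (Q : ℝ))⌋ = ⌊(m : ℝ) * x⌋ := by
  have hQr : (0 : ℝ) < (Q : ℝ) := by exact_mod_cast hQ
  have hq'0 : (0 : ℝ) < q' := lt_of_lt_of_le hQr hq'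
  set r : ℤ := (m * P) % Q with hr_def
  set d : ℤ := (m * P) / Q with hd_def
  have hdr : m * P = Q * d + r := (Int.mul_ediv_add_emod (m * P) Q).symm
  have hr0 : 0 ≤ r := Int.emod_nonneg _ (by omega)
  have hrQ : r < Q := Int.emod_lt_of_pos _ hQ
  have hrne : r ≠ 0 := by
    intro h
    have hdvd : Q ∣ m * P := Int.dvd_of_emod_eq_zero h
    have : Q ∣ m := (hcop.symm.dvd_of_dvd_mul_right) hdvd
    have := Int.le_of_dvd (by omega) this
    omega
  have hr1 : 1 ≤ r := by omega
  have hdrR : (m : ℝ) * (P : ℝ) = (Q : ℝ) * (d : ℝ) + (r : ℝ) := by exact_mod_cast hdr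
  have key : (m : ℝ) * ((P : ℝ) / (Q : ℝ)) = (d : ℝ) + (r : ℝ) / (Q : ℝ) := by
    field_simp
    linarith
  have hrQ1 : (1 : ℝ) ≤ (r : ℝ) := by exact_mod_cast hr1
  have hrQ2 : (r : ℝ) ≤ (Q : ℝ) - 1 := by
    exact_mod_cast (show r ≤ Q - 1 by omega)
  have hmR1 : (1 : ℝ) ≤ (m : ℝ) := by exact_mod_cast hm1
  have hmR2 : (m : ℝ) ≤ (Q : ℝ) - 1 := by
    have := hm2; push_cast at this ⊢; exact_mod_cast this
  -- bound on |m * (x - P/Q)|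
  have habs : |(m : ℝ) * (x - (P : ℝ) / (Q : ℝ))| ≤ (m : ℝ) / ((Q : ℝ) * q') := by
    rw [abs_mul, abs_of_nonneg (by linarith : (0:ℝ) ≤ (m : ℝ))]
    calc (m : ℝ) * |x - (P : ℝ) / (Q : ℝ)| ≤ (m : ℝ) * (1 / ((Q : ℝ) * q')) :=
          mul_le_mul_of_nonneg_left happ (by linarith)
      _ = (m : ℝ) / ((Q : ℝ) * q') := by ring
  have hsmall : (m : ℝ) / ((Q : ℝ) * q') < 1 / (Q : ℝ) := by
    rw [div_lt_div_iff₀ (by positivity) hQr]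
    nlinarith
  obtain ⟨hlo, hhi⟩ := abs_le.mp habs
  have h1Q : (1 : ℝ) / (Q : ℝ) ≤ (r : ℝ) / (Q : ℝ) := by gcongr
  have h2Q : (r : ℝ) / (Q : ℝ) ≤ ((Q : ℝ) - 1) / (Q : ℝ) := by gcongr
  have hsum : ((Q : ℝ) - 1) / (Q : ℝ) + 1 / (Q : ℝ) = 1 := by field_simp; ring
  have hmx : (m : ℝ) * x = (d : ℝ) + (r : ℝ) / (Q : ℝ) + (m : ℝ) * (x - (P : ℝ) / (Q : ℝ)) := by
    rw [← key]; ring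
  have hfloor1 : ⌊(m : ℝ) * ((P : ℝ) / (Q : ℝ))⌋ = d := by
    rw [key, Int.floor_eq_iff]
    constructor
    · have : (0:ℝ) ≤ (r : ℝ) / (Q : ℝ) := by positivity
      linarith
    · have : (r : ℝ) / (Q : ℝ) < 1 := by rw [div_lt_one hQr]; linarith
      push_cast; linarith
  have hfloor2 : ⌊(m : ℝ) * x⌋ = d := by
    rw [Int.floor_eq_iff]
    constructor
    · rw [hmx]; linarith
    · rw [hmx]; push_cast; linarith
  rw [hfloor1, hfloor2]

end StmtAux

/-- For irrational `α ∈ [0,1]` with `n`-th convergent `α_n = p_n/q_n`, `n ≥ 2`, the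
Sturmian words with slopes `α_n` and `α` coincide for `1 ≤ k ≤ q_n − 2`. -/
theorem stmt4 (α : ℝ) (hα : Irrational α) (hmem : α ∈ Set.Icc (0:ℝ) 1)
    (n : ℕ) (hn : 2 ≤ n) (k : ℤ) (hk1 : 1 ≤ k)
    (hk2 : (k : ℝ) ≤ (GenContFract.of α).dens n - 2) :
    sturmian ((GenContFract.of α).nums n / (GenContFract.of α).dens n) k
      = sturmian α k := by
  classical
  have hnt := StmtAux.not_terminatedAt α hα
  obtain ⟨j, rfl⟩ : ∃ j, n = j + 2 := ⟨n - 2, by omega⟩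
  set g := GenContFract.of α with hg
  obtain ⟨P, Q, hPa, hQb⟩ := StmtAux.contsAux_int α hα (j + 3)
  obtain ⟨P₀, Q₀, hP₀a, hQ₀b⟩ := StmtAux.contsAux_int α hα (j + 2)
  have hPnum : g.nums (j + 2) = (P : ℝ) := by
    rw [GenContFract.num_eq_conts_a, GenContFract.nth_cont_eq_succ_nth_contAux]; exact hPa
  have hQden : g.dens (j + 2) = (Q : ℝ) := by
    rw [GenContFract.den_eq_conts_b, GenContFract.nth_cont_eq_succ_nth_contAux]; exact hQb
  have hP₀num : g.nums (j + 1) = (P₀ : ℝ) := by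
    rw [GenContFract.num_eq_conts_a, GenContFract.nth_cont_eq_succ_nth_contAux]; exact hP₀a
  have hQ₀den : g.dens (j + 1) = (Q₀ : ℝ) := by
    rw [GenContFract.den_eq_conts_b, GenContFract.nth_cont_eq_succ_nth_contAux]; exact hQ₀b
  rw [hQden] at hk2
  rw [hPnum, hQden]
  -- Q ≥ 3
  have hQ3R : (3 : ℝ) ≤ (Q : ℝ) := by
    have : (1 : ℝ) ≤ (k : ℝ) := by exact_mod_cast hk1
    linarith
  have hQ3 : 3 ≤ Q := by exact_mod_cast hQ3R
  have hQpos : 0 < Q := by omega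
  have hQr : (0 : ℝ) < (Q : ℝ) := by exact_mod_cast hQpos
  -- monotonicity of denominators
  have hq'ge : (Q : ℝ) ≤ g.dens (j + 3) := by
    rw [← hQden]; exact GenContFract.of_den_mono
  -- approximation
  have happ : |α - (P : ℝ) / (Q : ℝ)| ≤ 1 / ((Q : ℝ) * g.dens (j + 3)) := by
    have h := GenContFract.abs_sub_convs_le (v := α) (n := j + 2) (hnt _)
    rwa [GenContFract.conv_eq_num_div_den, hPnum, hQden] at h
  -- determinant / coprimality
  have hdet := SimpContFract.determinant (K := ℝ) (s := SimpContFract.of α)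
    (n := j + 1) (hnt (j + 1))
  have hdetR : (P₀ : ℝ) * (Q : ℝ) - (Q₀ : ℝ) * (P : ℝ) = ((-1 : ℝ)) ^ (j + 2) := by
    have hcoe : ((SimpContFract.of α : SimpContFract ℝ) : GenContFract ℝ) = g := rfl
    rw [hcoe, hP₀num, hQden, hQ₀den, hPnum] at hdet
    exact hdet
  have hdetZ : P₀ * Q - Q₀ * P = (-1) ^ (j + 2) := by
    have : ((P₀ * Q - Q₀ * P : ℤ) : ℝ) = (((-1 : ℤ) ^ (j + 2) : ℤ) : ℝ) := by
      push_cast; push_cast at hdetR; linarith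
    exact_mod_cast this
  have hsq : (P₀ * Q - Q₀ * P) * (P₀ * Q - Q₀ * P) = 1 := by
    rw [hdetZ, ← pow_add]
    rw [show (j + 2) + (j + 2) = 2 * (j + 2) by ring, pow_mul]
    norm_num
  have hcop : IsCoprime P Q := by
    refine ⟨-((P₀ * Q - Q₀ * P) * Q₀), (P₀ * Q - Q₀ * P) * P₀, ?_⟩
    nlinarith [hsq]
  -- floors agree
  have hfl : ∀ m : ℤ, 1 ≤ m → m ≤ Q - 1 →
      ⌊(m : ℝ) * ((P : ℝ) / (Q : ℝ))⌋ = ⌊(m : ℝ) * α⌋ := fun m hm1 hm2 =>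
    StmtAux.floor_conv_eq α P Q hQpos hcop (g.dens (j + 3)) hq'ge happ m hm1 hm2
  have hkQ : k ≤ Q - 2 := by exact_mod_cast (by push_cast; linarith : (k : ℝ) ≤ (Q : ℝ) - 2)
  have h1 := hfl k hk1 (by omega)
  have h2 := hfl (k + 1) (by omega) (by omega)
  -- conclude
  rw [sturmian, sturmian]
  have e1 := StmtAux.fract_mem_iff ((P : ℝ) / (Q : ℝ)) k
  have e2 := StmtAux.fract_mem_iff α k
  have hcast : ∀ β : ℝ, ⌊((k : ℝ) + 1) * β⌋ = ⌊((k + 1 : ℤ) : ℝ) * β⌋ := by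
    intro β; push_cast; ring_nf
  rw [hcast] at e1 e2
  have hiff : Int.fract ((k : ℝ) * ((P : ℝ) / (Q : ℝ))) ∈ Set.Ico (1 - (P : ℝ) / (Q : ℝ)) 1 ↔
      Int.fract ((k : ℝ) * α) ∈ Set.Ico (1 - α) 1 := by rw [e1, e2, h1, h2]
  rw [if_congr hiff rfl rfl]
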